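/- Let γ ∈ (0,1), μ > 0, and M(θ) = θ^{−γ} ∫₀^θ (1 − e^{−μξ^γ})/ξ^{1−γ} dξ. Then for all 0 < θ < θ', one has 0 ≤ M(θ') − M(θ) ≤ (μ / (2 θ^{1−γ})) (θ' − θ). -/

import Mathlib

open Real Set MeasureTheory intervalIntegral

/-- The auxiliary function `M(θ) = θ^(−γ) ∫₀^θ (1 − e^(−μξ^γ))/ξ^(1−γ) dξ`. -/
noncomputable def Mfun (γ μ θ : ℝ) : ℝ :=
  θ ^ (-γ) * ∫ ξ in (0:ℝ)..θ, (1 - Real.exp (-(μ * ξ ^ γ))) / ξ ^ (1 - γ)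

/-- ψ(a) = a²/2 − 1 + e^{−a} + a e^{−a} is nonnegative for a ≥ 0. -/
lemma psi_nonneg {a : ℝ} (ha : 0 ≤ a) :
    0 ≤ a ^ 2 / 2 - 1 + Real.exp (-a) + a * Real.exp (-a) := by
  set ψ : ℝ → ℝ := fun x => x ^ 2 / 2 - 1 + Real.exp (-x) + x * Real.exp (-x) with hψ
  have hderiv : ∀ x : ℝ, HasDerivAt ψ (x * (1 - Real.exp (-x))) x := by
    intro x
    have h1 : HasDerivAt (fun x : ℝ => Real.exp (-x)) (-Real.exp (-x)) x := by
      simpa [Function.comp_def] using (Real.hasDerivAt_exp (-x)).comp x (hasDerivAt_neg x)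
    have h2 : HasDerivAt (fun x : ℝ => x ^ 2 / 2 - 1) x x := by
      have := ((hasDerivAt_pow 2 x).div_const 2).sub_const 1
      simpa using this
    have h3 : HasDerivAt (fun x : ℝ => x * Real.exp (-x))
        (1 * Real.exp (-x) + x * -Real.exp (-x)) x := (hasDerivAt_id x).mul h1
    have := (h2.add h1).add h3
    refine this.congr_deriv ?_
    ring
  have hmono : MonotoneOn ψ (Set.Ici (0 : ℝ)) := by
    apply monotoneOn_of_deriv_nonneg (convex_Ici 0)
    · exact fun x _ => (hderiv x).continuousAt.continuousWithinAt
    · exact fun x _ => (hderiv x).differentiableAt.differentiableWithinAt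
    · intro x hx
      rw [(hderiv x).deriv]
      rw [interior_Ici] at hx
      have hx0 : (0:ℝ) < x := hx
      have : Real.exp (-x) ≤ 1 := by
        rw [Real.exp_le_one_iff]; linarith
      nlinarith
  have h0 : ψ 0 = 0 := by simp [hψ]
  have := hmono (Set.self_mem_Ici) (Set.mem_Ici.2 ha) ha
  rw [h0] at this
  exact this

/-- `g(a) = 1 - (1 - e^{-a})/a`. -/
noncomputable def gfun (a : ℝ) : ℝ := 1 - (1 - Real.exp (-a)) / a

lemma gfun_hasDerivAt {x : ℝ} (hx : 0 < x) :
    HasDerivAt gfun ((1 - Real.exp (-x) - x * Real.exp (-x)) / x ^ 2) x := by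
  have h1 : HasDerivAt (fun x : ℝ => 1 - Real.exp (-x)) (Real.exp (-x)) x := by
    have : HasDerivAt (fun x : ℝ => Real.exp (-x)) (-Real.exp (-x)) x := by
      simpa [Function.comp_def] using (Real.hasDerivAt_exp (-x)).comp x (hasDerivAt_neg x)
    simpa [Pi.sub_def] using (hasDerivAt_const x (1:ℝ)).sub this
  have h2 : HasDerivAt (fun x : ℝ => (1 - Real.exp (-x)) / x)
      ((Real.exp (-x) * x - (1 - Real.exp (-x)) * 1) / x ^ 2) x :=
    h1.div (hasDerivAt_id x) hx.ne'
  have h3 := (hasDerivAt_const x (1:ℝ)).sub h2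
  have heq : (0 : ℝ) - (Real.exp (-x) * x - (1 - Real.exp (-x)) * 1) / x ^ 2
      = (1 - Real.exp (-x) - x * Real.exp (-x)) / x ^ 2 := by
    field_simp
    ring
  rw [heq] at h3
  exact h3

lemma gfun_deriv_bounds {x : ℝ} (hx : 0 < x) :
    0 ≤ (1 - Real.exp (-x) - x * Real.exp (-x)) / x ^ 2 ∧
    (1 - Real.exp (-x) - x * Real.exp (-x)) / x ^ 2 ≤ 1 / 2 := by
  have hx2 : (0:ℝ) < x ^ 2 := by positivity
  constructor
  · apply div_nonneg _ hx2.le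
    have h := Real.add_one_le_exp x
    have he : 0 < Real.exp (-x) := Real.exp_pos _
    have hinv : Real.exp (-x) * Real.exp x = 1 := by
      rw [← Real.exp_add]; simp
    nlinarith
  · rw [div_le_iff₀ hx2]
    have := psi_nonneg hx.le
    nlinarith

lemma gfun_diff_bounds {a b : ℝ} (ha : 0 < a) (hab : a ≤ b) :
    0 ≤ gfun b - gfun a ∧ gfun b - gfun a ≤ (b - a) / 2 := by
  have hmem : ∀ x ∈ Set.Icc a b, 0 < x := fun x hx => lt_of_lt_of_le ha hx.1
  have hmemI : ∀ x ∈ interior (Set.Icc a b), 0 < x := by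
    intro x hx
    exact hmem x (interior_subset hx)
  constructor
  · have hmono : MonotoneOn gfun (Set.Icc a b) := by
      apply monotoneOn_of_deriv_nonneg (convex_Icc a b)
      · exact fun x hx => (gfun_hasDerivAt (hmem x hx)).continuousAt.continuousWithinAt
      · exact fun x hx => (gfun_hasDerivAt (hmemI x hx)).differentiableAt.differentiableWithinAt
      · intro x hx
        rw [(gfun_hasDerivAt (hmemI x hx)).deriv]
        exact (gfun_deriv_bounds (hmemI x hx)).1
    have := hmono (Set.left_mem_Icc.2 hab) (Set.right_mem_Icc.2 hab) hab
    linarith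
  · set k : ℝ → ℝ := fun x => x / 2 - gfun x with hk
    have hkd : ∀ x, 0 < x → HasDerivAt k
        (1 / 2 - (1 - Real.exp (-x) - x * Real.exp (-x)) / x ^ 2) x := by
      intro x hx
      exact ((hasDerivAt_id x).div_const 2).sub (gfun_hasDerivAt hx)
    have hmono : MonotoneOn k (Set.Icc a b) := by
      apply monotoneOn_of_deriv_nonneg (convex_Icc a b)
      · exact fun x hx => (hkd x (hmem x hx)).continuousAt.continuousWithinAt
      · exact fun x hx => (hkd x (hmemI x hx)).differentiableAt.differentiableWithinAt
      · intro x hx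
        rw [(hkd x (hmemI x hx)).deriv]
        have := (gfun_deriv_bounds (hmemI x hx)).2
        linarith
    have := hmono (Set.left_mem_Icc.2 hab) (Set.right_mem_Icc.2 hab) hab
    simp only [hk] at this
    linarith

/-- Closed form for `Mfun`. -/
lemma Mfun_eq {γ μ θ : ℝ} (hγ0 : 0 < γ) (hγ1 : γ < 1) (hμ : 0 < μ) (hθ : 0 < θ) :
    Mfun γ μ θ = (1 / γ) * gfun (μ * θ ^ γ) := by
  have hθγ : (0:ℝ) < θ ^ γ := Real.rpow_pos_of_pos hθ γ
  set F : ℝ → ℝ := fun x => (1 / γ) * (x ^ γ - (1 - Real.exp (-(μ * x ^ γ))) / μ) with hF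
  set f : ℝ → ℝ := fun ξ => (1 - Real.exp (-(μ * ξ ^ γ))) / ξ ^ (1 - γ) with hf
  have hint : ∫ ξ in (0:ℝ)..θ, f ξ = F θ - F 0 := by
    apply intervalIntegral.integral_eq_sub_of_hasDeriv_right_of_le hθ.le
    · -- continuity of F on [0, θ]
      apply ContinuousOn.mul continuousOn_const
      apply ContinuousOn.sub
      · exact (Real.continuous_rpow_const hγ0.le).continuousOn
      · apply ContinuousOn.div_const
        apply ContinuousOn.sub continuousOn_const
        apply Continuous.comp_continuousOn Real.continuous_exp
        apply ContinuousOn.neg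
        exact ContinuousOn.mul continuousOn_const (Real.continuous_rpow_const hγ0.le).continuousOn
    · -- derivative on (0, θ)
      intro x hx
      have hx0 : 0 < x := hx.1
      have h1 : HasDerivAt (fun x : ℝ => x ^ γ) (γ * x ^ (γ - 1)) x :=
        Real.hasDerivAt_rpow_const (Or.inl hx0.ne')
      have h2 : HasDerivAt (fun x : ℝ => Real.exp (-(μ * x ^ γ)))
          (Real.exp (-(μ * x ^ γ)) * (-(μ * (γ * x ^ (γ - 1))))) x := by
        exact (Real.hasDerivAt_exp _).comp x ((h1.const_mul μ).neg)
      have h3 : HasDerivAt F ((1 / γ) * (γ * x ^ (γ - 1) -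
          (0 - Real.exp (-(μ * x ^ γ)) * (-(μ * (γ * x ^ (γ - 1))))) / μ)) x := by
        exact ((h1.sub (((hasDerivAt_const x (1:ℝ)).sub h2).div_const μ))).const_mul (1 / γ)
      have hxpow : x ^ (1 - γ) = (x ^ (γ - 1))⁻¹ := by
        rw [show (1 - γ) = -(γ - 1) by ring, Real.rpow_neg hx0.le]
      have hxgm1 : (0:ℝ) < x ^ (γ - 1) := Real.rpow_pos_of_pos hx0 _
      have heq : (1 / γ) * (γ * x ^ (γ - 1) -
          (0 - Real.exp (-(μ * x ^ γ)) * (-(μ * (γ * x ^ (γ - 1))))) / μ) = f x := by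
        simp only [hf, hxpow]
        field_simp
        ring
      rw [← heq]
      exact h3.hasDerivWithinAt
    · -- interval integrability of f
      apply IntervalIntegrable.mono_fun (intervalIntegrable_rpow' (r := γ - 1) (by linarith))
      · rw [Set.uIoc_of_le hθ.le]
        apply ContinuousOn.aestronglyMeasurable _ measurableSet_Ioc
        intro x hx
        have hx0 : x ≠ 0 := (hx.1).ne'
        apply ContinuousAt.continuousWithinAt
        apply ContinuousAt.div
        · apply ContinuousAt.sub continuousAt_const
          apply Real.continuous_exp.continuousAt.comp
          apply ContinuousAt.neg
          exact (Real.continuousAt_rpow_const x γ (Or.inl hx0)).const_smul μ |>.congr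
            (by filter_upwards with y; simp [smul_eq_mul])
        · exact Real.continuousAt_rpow_const x (1 - γ) (Or.inl hx0)
        · exact (Real.rpow_pos_of_pos hx.1 _).ne'
      · rw [Filter.EventuallyLE, ae_restrict_iff' measurableSet_uIoc]
        apply Filter.Eventually.of_forall
        intro x hx
        rw [Set.uIoc_of_le hθ.le] at hx
        have hx0 : 0 < x := hx.1
        have hxp : (0:ℝ) < x ^ (1 - γ) := Real.rpow_pos_of_pos hx0 _
        have hxgm1 : (0:ℝ) < x ^ (γ - 1) := Real.rpow_pos_of_pos hx0 _
        have he0 : Real.exp (-(μ * x ^ γ)) ≤ 1 := by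
          rw [Real.exp_le_one_iff]
          have : (0:ℝ) < μ * x ^ γ := mul_pos hμ (Real.rpow_pos_of_pos hx0 γ)
          linarith
        have he1 : 0 < Real.exp (-(μ * x ^ γ)) := Real.exp_pos _
        have hxpow : x ^ (γ - 1) = 1 / x ^ (1 - γ) := by
          rw [show (γ - 1) = -(1 - γ) by ring, Real.rpow_neg hx0.le, one_div]
        have hnorm : ‖f x‖ ≤ x ^ (γ - 1) := by
          rw [hf, Real.norm_eq_abs, abs_div, abs_of_nonneg (by linarith),
            abs_of_nonneg hxp.le, hxpow]
          gcongr
          linarith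
        calc ‖f x‖ ≤ x ^ (γ - 1) := hnorm
          _ ≤ ‖x ^ (γ - 1)‖ := le_abs_self _
  have hF0 : F 0 = 0 := by
    rw [hF]
    simp [Real.zero_rpow hγ0.ne']
  rw [Mfun, ← hf, hint, hF0, sub_zero, hF, gfun]
  have hθγ' : θ ^ (-γ) = (θ ^ γ)⁻¹ := by
    rw [← Real.rpow_neg hθ.le]
  rw [hθγ']
  field_simp

theorem stmt9 (γ μ : ℝ) (hγ0 : 0 < γ) (hγ1 : γ < 1) (hμ : 0 < μ)
    (θ θ' : ℝ) (hθ : 0 < θ) (hθ' : θ < θ') :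
    0 ≤ Mfun γ μ θ' - Mfun γ μ θ ∧
    Mfun γ μ θ' - Mfun γ μ θ ≤ μ / (2 * θ ^ (1 - γ)) * (θ' - θ) := by
  have hθ'0 : 0 < θ' := hθ.trans hθ'
  have hθγ : (0:ℝ) < θ ^ γ := Real.rpow_pos_of_pos hθ γ
  have hθγ' : (0:ℝ) < θ' ^ γ := Real.rpow_pos_of_pos hθ'0 γ
  have ha : 0 < μ * θ ^ γ := mul_pos hμ hθγ
  have hab : μ * θ ^ γ ≤ μ * θ' ^ γ := by
    apply mul_le_mul_of_nonneg_left _ hμ.le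
    exact Real.rpow_le_rpow hθ.le hθ'.le hγ0.le
  have hM1 := Mfun_eq hγ0 hγ1 hμ hθ
  have hM2 := Mfun_eq hγ0 hγ1 hμ hθ'0
  have hg := gfun_diff_bounds ha hab
  have hdiff : Mfun γ μ θ' - Mfun γ μ θ =
      (1 / γ) * (gfun (μ * θ' ^ γ) - gfun (μ * θ ^ γ)) := by
    rw [hM1, hM2]; ring
  constructor
  · rw [hdiff]
    apply mul_nonneg (by positivity) hg.1
  · -- Bernoulli: θ'^γ ≤ θ^γ + γ θ^(γ-1) (θ' - θ)
    have hbern : θ' ^ γ - θ ^ γ ≤ γ * θ ^ (γ - 1) * (θ' - θ) := by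
      have ht : (1:ℝ) ≤ θ' / θ := (one_le_div hθ).2 hθ'.le
      have h := rpow_one_add_le_one_add_mul_self (s := θ' / θ - 1) (by linarith)
        hγ0.le hγ1.le
      have h1 : (1 : ℝ) + (θ' / θ - 1) = θ' / θ := by ring
      rw [h1, Real.div_rpow hθ'0.le hθ.le, div_le_iff₀ hθγ] at h
      have hθpow : θ ^ (γ - 1) = θ ^ γ / θ := Real.rpow_sub_one hθ.ne' γ
      rw [hθpow]
      calc θ' ^ γ - θ ^ γ ≤ (1 + γ * (θ' / θ - 1)) * θ ^ γ - θ ^ γ := by linarith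
        _ = γ * (θ ^ γ / θ) * (θ' - θ) := by field_simp; ring
    have hθpow2 : θ ^ (1 - γ) = (θ ^ (γ - 1))⁻¹ := by
      rw [show (1 - γ) = -(γ - 1) by ring, Real.rpow_neg hθ.le]
    have hθgm1 : (0:ℝ) < θ ^ (γ - 1) := Real.rpow_pos_of_pos hθ _
    rw [hdiff]
    calc (1 / γ) * (gfun (μ * θ' ^ γ) - gfun (μ * θ ^ γ))
        ≤ (1 / γ) * ((μ * θ' ^ γ - μ * θ ^ γ) / 2) := by
          exact mul_le_mul_of_nonneg_left hg.2 (by positivity)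
      _ = (μ / (2 * γ)) * (θ' ^ γ - θ ^ γ) := by field_simp
      _ ≤ (μ / (2 * γ)) * (γ * θ ^ (γ - 1) * (θ' - θ)) := by
          apply mul_le_mul_of_nonneg_left hbern (by positivity)
      _ = μ / (2 * θ ^ (1 - γ)) * (θ' - θ) := by
          rw [hθpow2]; field_simp
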